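/- Forney indices of an MDS convolutional code: Let F_q be a finite field and let G ∈ F_q[z]^{k×n} (1 ≤ k < n) be right invertible and minimal with row degrees ν_1,…,ν_k and complexity δ = ν_1 + … + ν_k. Suppose the free distance d = min{ wt(uG) : u ∈ F_q[z]^k, u ≠ 0 } equals the generalized Singleton bound S(n,k,δ) = (n-k)(⌊δ/k⌋+1)+δ+1. Write δ = ak + r with integers a ≥ 0 and 0 ≤ r ≤ k-1. Then exactly k - r of the row degrees ν_1,…,ν_k equal a and exactly r of them equal a + 1. -/
import Mathlib


open Polynomial Matrix

/-- The weight of a vector of polynomials: the total number of nonzero coefficients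
occurring in its polynomial entries. -/
def polyWt {F : Type*} [Field F] {n : ℕ} (v : Fin n → Polynomial F) : ℕ :=
  ∑ j, (v j).support.card

/-- The complexity of a polynomial generator matrix `G ∈ F[z]^{k×n}`:
the maximal degree of its `k×k` minors. -/
noncomputable def complexity {F : Type*} [Field F] {k n : ℕ}
    (G : Matrix (Fin k) (Fin n) (Polynomial F)) : ℕ :=
  Finset.univ.sup fun f : Fin k ↪ Fin n => ((G.submatrix id ⇑f).det).natDegree

/-- The `r`-th row degree of a polynomial matrix: the maximal degree of the
polynomial entries in row `r`. -/
noncomputable def rowDeg {F : Type*} [Field F] {k n : ℕ}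
    (G : Matrix (Fin k) (Fin n) (Polynomial F)) (r : Fin k) : ℕ :=
  Finset.univ.sup fun j => (G r j).natDegree

/-- **Forney indices of an MDS convolutional code.**
Let `F_q` be a finite field, `G ∈ F_q[z]^{k×n}` (`1 ≤ k < n`) right invertible and
minimal with row degrees `ν` and complexity `δ = ∑ ν r`, and suppose the free distance
equals the generalized Singleton bound `S(n,k,δ) = (n-k)(⌊δ/k⌋+1)+δ+1`.  Write
`δ = a·k + r` with `a ≥ 0` and `0 ≤ r ≤ k-1`.  Then exactly `k - r` of the Forney
indices equal `a` and exactly `r` of them equal `a + 1`. -/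
theorem mds_forney_indices
    {F : Type*} [Field F] [Fintype F] {k n : ℕ}
    (hk : 1 ≤ k) (hkn : k < n)
    (G : Matrix (Fin k) (Fin n) (Polynomial F))
    (hright : ∃ H : Matrix (Fin n) (Fin k) (Polynomial F), G * H = 1)
    (ν : Fin k → ℕ) (hν : ∀ r, ν r = rowDeg G r)
    (δ : ℕ) (hδ : δ = ∑ r, ν r)
    (hminimal : complexity G = δ)
    (d : ℕ)
    (hd : IsLeast {w : ℕ | ∃ u : Fin k → Polynomial F,
      u ≠ 0 ∧ w = polyWt (Matrix.vecMul u G)} d)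
    (hMDS : d = (n - k) * (δ / k + 1) + δ + 1)
    (a r : ℕ) (ha : δ = a * k + r) (hr : r < k) :
    (Finset.univ.filter fun i : Fin k => ν i = a).card = k - r ∧
    (Finset.univ.filter fun i : Fin k => ν i = a + 1).card = r := by
  classical
  have hdle : ∀ u : Fin k → Polynomial F, u ≠ 0 → d ≤ polyWt (Matrix.vecMul u G) :=
    fun u hu => hd.2 ⟨u, hu, rfl⟩
  have hdk : δ / k = a := by
    rw [ha, mul_comm, Nat.mul_add_div (by omega), Nat.div_eq_of_lt hr, add_zero]
  have hd' : d = (n - k) * (a + 1) + (a * k + r) + 1 := by rw [hMDS, hdk, ha]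
  have hdeg : ∀ i j, (G i j).natDegree ≤ ν i := fun i j => by
    rw [hν]; unfold rowDeg; exact Finset.le_sup (f := fun j => (G i j).natDegree) (Finset.mem_univ j)
  -- Step 1: every row degree is at least `a`.
  have hstep1 : ∀ i, a ≤ ν i := by
    intro i
    by_contra hlt
    push_neg at hlt
    have hu : (fun j => if j = i then (1 : Polynomial F) else 0) ≠ 0 := by
      intro h
      have := congrFun h i
      simp at this
    have hle := hdle _ hu
    have hrow : Matrix.vecMul (fun j => if j = i then (1 : Polynomial F) else 0) G
        = fun j => G i j := by
      funext j
      simp [Matrix.vecMul, dotProduct, ite_mul]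
    rw [hrow] at hle
    have hw : polyWt (fun j => G i j) ≤ n * (ν i + 1) := by
      rw [polyWt]
      calc ∑ j, (G i j).support.card ≤ ∑ _j : Fin n, (ν i + 1) := by
            refine Finset.sum_le_sum fun j _ => ?_
            have h1 : (G i j).support.card ≤ (G i j).natDegree + 1 := by
              have := Finset.card_le_card ((G i j).supp_subset_range_natDegree_succ)
              simpa using this
            have := hdeg i j
            omega
        _ = n * (ν i + 1) := by
            rw [Finset.sum_const, Finset.card_univ, Fintype.card_fin, smul_eq_mul]
    have hna : n * (ν i + 1) ≤ n * a := Nat.mul_le_mul_left n (by omega)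
    have key : n * a ≤ (n - k) * (a + 1) + k * a := by
      have h1 : (n - k) * a + k * a = n * a := by
        rw [← Nat.add_mul, Nat.sub_add_cancel hkn.le]
      have h2 : (n - k) * a ≤ (n - k) * (a + 1) := Nat.mul_le_mul_left _ (by omega)
      omega
    have h3 : a * k = k * a := Nat.mul_comm a k
    omega
  -- Notation for the set of rows of degree exactly `a`.
  set S : Finset (Fin k) := Finset.univ.filter (fun i => ν i = a) with hSdef
  have hsum_sub : ∑ i, (ν i - a) = r := by
    have e1 : ∑ i, ν i = ∑ i, ((ν i - a) + a) :=
      Finset.sum_congr rfl fun i _ => (Nat.sub_add_cancel (hstep1 i)).symm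
    rw [Finset.sum_add_distrib, Finset.sum_const, Finset.card_univ, Fintype.card_fin,
      smul_eq_mul] at e1
    have h2 : a * k = k * a := Nat.mul_comm a k
    omega
  have hScomp_le : (Finset.univ.filter fun i => ¬ ν i = a).card ≤ r := by
    calc (Finset.univ.filter fun i => ¬ ν i = a).card
        = ∑ _i ∈ Finset.univ.filter fun i => ¬ ν i = a, 1 := by
          rw [Finset.sum_const, smul_eq_mul, mul_one]
      _ ≤ ∑ i ∈ Finset.univ.filter fun i => ¬ ν i = a, (ν i - a) := by
          refine Finset.sum_le_sum fun i hi => ?_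
          have h1 : ν i ≠ a := (Finset.mem_filter.mp hi).2
          have := hstep1 i
          omega
      _ ≤ ∑ i, (ν i - a) := Finset.sum_le_sum_of_subset (Finset.filter_subset _ _)
      _ = r := hsum_sub
  have hcard_split : S.card + (Finset.univ.filter fun i => ¬ ν i = a).card = k := by
    rw [hSdef, Finset.card_filter_add_card_filter_not, Finset.card_univ,
      Fintype.card_fin]
  have htlow : k ≤ S.card + r := by omega
  have htk : S.card ≤ k := by
    have := Finset.card_le_univ S
    simpa using this
  have h1t : 1 ≤ S.card := by omega
  -- Choose a set of `S.card - 1` coefficient positions.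
  have hcardGe : S.card - 1 ≤ (Finset.univ : Finset (Fin n × Fin (a + 1))).card := by
    rw [Finset.card_univ, Fintype.card_prod, Fintype.card_fin, Fintype.card_fin]
    have h1 : n ≤ n * (a + 1) := Nat.le_mul_of_pos_right n (Nat.succ_pos a)
    omega
  obtain ⟨T, -, hTcard⟩ := Finset.exists_subset_card_eq hcardGe
  -- The linear family of codewords coming from constant inputs supported on `S`.
  let uOf : (S → F) → (Fin k → Polynomial F) := fun c i =>
    if h : i ∈ S then Polynomial.C (c ⟨i, h⟩) else 0
  let Φ : (S → F) → (T → F) := fun c p =>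
    ((Matrix.vecMul (uOf c) G) p.1.1).coeff (p.1.2 : ℕ)
  have hq : 1 < Fintype.card F := Fintype.one_lt_card
  have hcardlt : Fintype.card (T → F) < Fintype.card (S → F) := by
    rw [Fintype.card_fun, Fintype.card_fun, Fintype.card_coe, Fintype.card_coe, hTcard]
    exact Nat.pow_lt_pow_right hq (by omega)
  obtain ⟨c₁, c₂, hne, hΦeq⟩ := Fintype.exists_ne_map_eq_of_card_lt Φ hcardlt
  set u : Fin k → Polynomial F := uOf c₁ - uOf c₂ with hudef
  have hu_ne : u ≠ 0 := by
    obtain ⟨s, hs⟩ := Function.ne_iff.mp hne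
    intro h0
    have h1 := congrFun h0 s.1
    simp only [hudef, uOf, Pi.sub_apply, Pi.zero_apply, dif_pos s.2, Subtype.coe_eta] at h1
    exact hs (Polynomial.C_injective (sub_eq_zero.mp h1))
  have hvanish : ∀ p ∈ T, ((Matrix.vecMul u G) p.1).coeff (p.2 : ℕ) = 0 := by
    intro p hp
    have h1 : Matrix.vecMul u G = Matrix.vecMul (uOf c₁) G - Matrix.vecMul (uOf c₂) G :=
      Matrix.sub_vecMul G (uOf c₁) (uOf c₂)
    rw [h1]
    simp only [Pi.sub_apply, Polynomial.coeff_sub]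
    have h2 : Φ c₁ ⟨p, hp⟩ = Φ c₂ ⟨p, hp⟩ := congrFun hΦeq ⟨p, hp⟩
    exact sub_eq_zero_of_eq h2
  have hdegu : ∀ j, (Matrix.vecMul u G j).natDegree ≤ a := by
    intro j
    have h0 : Matrix.vecMul u G j = ∑ i, u i * G i j := by
      simp [Matrix.vecMul, dotProduct]
    rw [h0]
    refine Polynomial.natDegree_sum_le_of_forall_le _ _ fun i _ => ?_
    by_cases hiS : i ∈ S
    · have hui : u i = Polynomial.C (c₁ ⟨i, hiS⟩ - c₂ ⟨i, hiS⟩) := by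
        simp [hudef, uOf, dif_pos hiS, map_sub]
      rw [hui]
      calc (Polynomial.C (c₁ ⟨i, hiS⟩ - c₂ ⟨i, hiS⟩) * G i j).natDegree
          ≤ (G i j).natDegree := Polynomial.natDegree_C_mul_le _ _
        _ ≤ ν i := hdeg i j
        _ = a := by
            have hiS' : i ∈ Finset.univ.filter (fun i => ν i = a) := by rwa [hSdef] at hiS
            exact (Finset.mem_filter.mp hiS').2
    · have hui : u i = 0 := by simp [hudef, uOf, dif_neg hiS]
      rw [hui]
      simp
  -- Weight counting: the codeword `u ᵥ* G` has weight at most `n(a+1) - (S.card - 1)`.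
  have hw : polyWt (Matrix.vecMul u G) + (S.card - 1) ≤ n * (a + 1) := by
    have hfiber : T.card = ∑ j, (T.filter fun p => p.1 = j).card :=
      Finset.card_eq_sum_card_fiberwise (fun p _ => Finset.mem_univ p.1)
    have hjj : ∀ j, ((Matrix.vecMul u G j).support).card
        + (T.filter fun p => p.1 = j).card ≤ a + 1 := by
      intro j
      set Ej := (T.filter fun p => p.1 = j).image (fun p => (p.2 : ℕ)) with hEj
      have hcardE : Ej.card = (T.filter fun p => p.1 = j).card := by
        rw [hEj]
        apply Finset.card_image_of_injOn
        intro p hp q hq hpq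
        have hpj := (Finset.mem_filter.mp (Finset.mem_coe.mp hp)).2
        have hqj := (Finset.mem_filter.mp (Finset.mem_coe.mp hq)).2
        exact Prod.ext (hpj.trans hqj.symm) (Fin.val_injective hpq)
      have hsub : (Matrix.vecMul u G j).support ∪ Ej ⊆ Finset.range (a + 1) := by
        apply Finset.union_subset
        · exact (Matrix.vecMul u G j).supp_subset_range (Nat.lt_succ_of_le (hdegu j))
        · intro e he
          obtain ⟨p, hp, rfl⟩ := Finset.mem_image.mp (hEj ▸ he)
          exact Finset.mem_range.mpr p.2.isLt
      have hdisj : Disjoint (Matrix.vecMul u G j).support Ej := by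
        rw [Finset.disjoint_right]
        intro e heE heS
        obtain ⟨p, hp, rfl⟩ := Finset.mem_image.mp (hEj ▸ heE)
        have hpT := (Finset.mem_filter.mp hp).1
        have hpj := (Finset.mem_filter.mp hp).2
        have h0 := hvanish p hpT
        rw [hpj] at h0
        exact (Polynomial.mem_support_iff.mp heS) h0
      calc ((Matrix.vecMul u G j).support).card + (T.filter fun p => p.1 = j).card
          = ((Matrix.vecMul u G j).support ∪ Ej).card := by
            rw [Finset.card_union_of_disjoint hdisj, hcardE]
        _ ≤ (Finset.range (a + 1)).card := Finset.card_le_card hsub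
        _ = a + 1 := Finset.card_range _
    calc polyWt (Matrix.vecMul u G) + (S.card - 1)
        = ∑ j, (Matrix.vecMul u G j).support.card
            + ∑ j, (T.filter fun p => p.1 = j).card := by
          rw [polyWt, ← hfiber, hTcard]
      _ = ∑ j, ((Matrix.vecMul u G j).support.card + (T.filter fun p => p.1 = j).card) :=
          Finset.sum_add_distrib.symm
      _ ≤ ∑ _j : Fin n, (a + 1) := Finset.sum_le_sum fun j _ => hjj j
      _ = n * (a + 1) := by
          rw [Finset.sum_const, Finset.card_univ, Fintype.card_fin, smul_eq_mul]
  have hdw := hdle u hu_ne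
  have hSr : S.card + r = k := by
    have h1 : d + (S.card - 1) ≤ n * (a + 1) := le_trans (Nat.add_le_add_right hdw _) hw
    have h2 : n * (a + 1) = (n - k) * (a + 1) + k * (a + 1) := by
      rw [← Nat.add_mul, Nat.sub_add_cancel hkn.le]
    have h3 : k * (a + 1) = a * k + k := by ring
    omega
  -- Every row degree outside `S` equals `a + 1`.
  have hall : ∀ i, i ∉ S → ν i = a + 1 := by
    by_contra hcon
    push_neg at hcon
    obtain ⟨i0, hi0S, hi0⟩ := hcon
    have hi0a : ν i0 ≠ a := by
      intro h
      exact hi0S (by rw [hSdef]; simp [h])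
    have hi0ge : a + 2 ≤ ν i0 := by
      have := hstep1 i0
      omega
    have hsplit : ∑ i ∈ S, ν i + ∑ i ∈ Finset.univ.filter (fun i => ¬ ν i = a), ν i
        = ∑ i, ν i := by
      rw [hSdef]
      exact Finset.sum_filter_add_sum_filter_not _ _ _
    have hSsum : ∑ i ∈ S, ν i = a * S.card := by
      have : ∀ i ∈ S, ν i = a := by
        intro i hi
        have hi' : i ∈ Finset.univ.filter (fun i => ν i = a) := by rwa [hSdef] at hi
        exact (Finset.mem_filter.mp hi').2
      rw [Finset.sum_congr rfl this, Finset.sum_const, smul_eq_mul, mul_comm]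
    have hcc : (Finset.univ.filter fun i => ¬ ν i = a).card = r := by omega
    have hlt2 : ∑ _i ∈ Finset.univ.filter (fun i => ¬ ν i = a), (a + 1)
        < ∑ i ∈ Finset.univ.filter (fun i => ¬ ν i = a), ν i := by
      apply Finset.sum_lt_sum
      · intro i hi
        have h1 : ν i ≠ a := (Finset.mem_filter.mp hi).2
        have := hstep1 i
        omega
      · refine ⟨i0, ?_, by omega⟩
        rw [Finset.mem_filter]
        exact ⟨Finset.mem_univ _, hi0a⟩
    rw [Finset.sum_const, hcc, smul_eq_mul] at hlt2
    have e2 : a * S.card + a * r = a * k := by rw [← Nat.mul_add, hSr]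
    have e3 : r * (a + 1) = a * r + r := by ring
    omega
  constructor
  · omega
  · have hfilter_eq : (Finset.univ.filter fun i : Fin k => ν i = a + 1)
        = (Finset.univ.filter fun i => ¬ ν i = a) := by
      ext i
      simp only [Finset.mem_filter, Finset.mem_univ, true_and]
      constructor
      · intro h
        omega
      · intro h
        exact hall i (by rw [hSdef]; simp [h])
    rw [hfilter_eq]
    omega
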